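/- arXiv:2504.18330 — 2 statements merged into one kernel-verified Lean document; each statement's English description precedes it below -/
import Mathlib

section
/- Let V : ℝⁿ × ℝⁿ → ℝ≥0 and suppose there exist class K∞ functions α1, α2 with α1(|x−x̂|) ≤ V(x,x̂) ≤ α2(|x−x̂|) for all x, x̂, and suppose along two solutions x(t), x̂(t) of a system the function t ↦ V(x(t),x̂(t)) is differentiable with derivative ≤ −κ·V(x(t),x̂(t)) + σ(‖w−ŵ‖) where κ > 0 and σ is class K∞. Then |x(t) − x̂(t)| ≤ α1⁻¹(2e^{−κt}α2(|x(0)−x̂(0)|)) + α1⁻¹((2/κ)σ(‖w−ŵ‖)) for all t ≥ 0. -/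
/-- Incremental ISS bound: if `α1(|x-x̂|) ≤ V(x,x̂) ≤ α2(|x-x̂|)` with `α1, α2` class `K∞`,
and along two trajectories `t ↦ V(x(t),x̂(t))` is differentiable with derivative
`≤ -κ V(x(t),x̂(t)) + σ(s)` (with `s = ‖w - ŵ‖`), then
`|x(t)-x̂(t)| ≤ α1⁻¹(2 e^{-κt} α2(|x(0)-x̂(0)|)) + α1⁻¹((2/κ) σ(s))`. -/
theorem stmt4 {n : ℕ} (x xh : ℝ → EuclideanSpace ℝ (Fin n))
    (V : EuclideanSpace ℝ (Fin n) × EuclideanSpace ℝ (Fin n) → ℝ)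
    (α1 α2 σ α1inv : ℝ → ℝ) (κ s : ℝ) (hκ : 0 < κ) (hs : 0 ≤ s)
    -- α1 class K∞ with inverse α1inv:
    (hα1cont : ContinuousOn α1 (Set.Ici 0)) (hα1mono : StrictMonoOn α1 (Set.Ici 0))
    (hα10 : α1 0 = 0) (hα1unb : ∀ M : ℝ, ∃ r ≥ (0:ℝ), M ≤ α1 r)
    (hinv_nonneg : ∀ a ≥ (0:ℝ), 0 ≤ α1inv a)
    (hleft : ∀ r ≥ (0:ℝ), α1inv (α1 r) = r)
    (hright : ∀ a ≥ (0:ℝ), α1 (α1inv a) = a)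
    -- α2 class K∞:
    (hα2cont : ContinuousOn α2 (Set.Ici 0)) (hα2mono : StrictMonoOn α2 (Set.Ici 0))
    (hα20 : α2 0 = 0) (hα2unb : ∀ M : ℝ, ∃ r ≥ (0:ℝ), M ≤ α2 r)
    -- σ class K∞:
    (hσcont : ContinuousOn σ (Set.Ici 0)) (hσmono : StrictMonoOn σ (Set.Ici 0))
    (hσ0 : σ 0 = 0) (hσunb : ∀ M : ℝ, ∃ r ≥ (0:ℝ), M ≤ σ r)
    -- sandwich bounds:
    (hsand : ∀ a b : EuclideanSpace ℝ (Fin n), α1 ‖a - b‖ ≤ V (a, b) ∧ V (a, b) ≤ α2 ‖a - b‖)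
    -- derivative of the Lyapunov function along the trajectories:
    (D : ℝ → ℝ)
    (hD : ∀ t ≥ (0:ℝ), HasDerivAt (fun τ => V (x τ, xh τ)) (D t) t)
    (hDle : ∀ t ≥ (0:ℝ), D t ≤ -κ * V (x t, xh t) + σ s) :
    ∀ t ≥ (0:ℝ),
      ‖x t - xh t‖ ≤ α1inv (2 * Real.exp (-κ * t) * α2 ‖x 0 - xh 0‖)
        + α1inv ((2 / κ) * σ s) := by

  intro t ht
  set g : ℝ → ℝ := fun τ => V (x τ, xh τ) with hg
  -- σ s ≥ 0 and α2 ‖x0 - xh0‖ ≥ 0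
  have hσs : 0 ≤ σ s := by
    rcases eq_or_lt_of_le hs with h | h
    · rw [← h, hσ0]
    · rw [← hσ0]; exact le_of_lt (hσmono (Set.mem_Ici.mpr (le_refl 0)) (Set.mem_Ici.mpr (le_of_lt h)) h)
  have hα2nn : ∀ r ≥ (0:ℝ), 0 ≤ α2 r := by
    intro r hr
    rcases eq_or_lt_of_le hr with h | h
    · rw [← h, hα20]
    · rw [← hα20]; exact le_of_lt (hα2mono (Set.mem_Ici.mpr (le_refl 0)) (Set.mem_Ici.mpr (le_of_lt h)) h)
  -- Gronwall bound
  have hgron : g t ≤ gronwallBound (g 0) (-κ) (σ s) (t - 0) := by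
    apply le_gronwallBound_of_liminf_deriv_right_le (f' := D)
      (fun τ hτ => ((hD τ hτ.1).continuousAt).continuousWithinAt)
      (fun τ hτ r hr => ((hD τ hτ.1).hasDerivWithinAt.liminf_right_slope_le hr))
      le_rfl (fun τ hτ => hDle τ hτ.1) t ⟨ht, le_rfl⟩
  have hκne : (-κ : ℝ) ≠ 0 := by linarith
  rw [gronwallBound_of_K_ne_0 hκne] at hgron
  simp only [sub_zero] at hgron
  -- simplify the bound
  have hexp : Real.exp (-κ * t) ≤ 1 := Real.exp_le_one_iff.mpr (by nlinarith)
  have hexppos : 0 < Real.exp (-κ * t) := Real.exp_pos _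
  have hbound : g t ≤ Real.exp (-κ * t) * α2 ‖x 0 - xh 0‖ + σ s / κ := by
    have h0 : g 0 ≤ α2 ‖x 0 - xh 0‖ := (hsand (x 0) (xh 0)).2
    have : σ s / -κ * (Real.exp (-κ * t) - 1) ≤ σ s / κ := by
      rw [div_neg, neg_mul]
      have h1 : σ s / κ * (Real.exp (-κ * t) - 1) ≥ -(σ s / κ) := by
        have hd : 0 ≤ σ s / κ := div_nonneg hσs (le_of_lt hκ)
        nlinarith
      linarith
    nlinarith
  -- lower bound and inversion
  have hnn : (0:ℝ) ≤ ‖x t - xh t‖ := norm_nonneg _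
  have hlow : α1 ‖x t - xh t‖ ≤ g t := (hsand (x t) (xh t)).1
  -- key: if α1 r ≤ c, c ≥ 0, then r ≤ α1inv c
  have key : ∀ c ≥ (0:ℝ), α1 ‖x t - xh t‖ ≤ c → ‖x t - xh t‖ ≤ α1inv c := by
    intro c hc hle
    by_contra hgt
    push_neg at hgt
    have := hα1mono (hinv_nonneg c hc) hnn hgt
    rw [hright c hc] at this
    linarith
  set A := Real.exp (-κ * t) * α2 ‖x 0 - xh 0‖ with hA
  set B := σ s / κ with hB
  have hAnn : 0 ≤ A := mul_nonneg (le_of_lt hexppos) (hα2nn _ (norm_nonneg _))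
  have hBnn : 0 ≤ B := div_nonneg hσs (le_of_lt hκ)
  have h2A : 2 * Real.exp (-κ * t) * α2 ‖x 0 - xh 0‖ = 2 * A := by rw [hA]; ring
  have h2B : (2 / κ) * σ s = 2 * B := by rw [hB]; ring
  have hinv1 : 0 ≤ α1inv (2 * Real.exp (-κ * t) * α2 ‖x 0 - xh 0‖) :=
    hinv_nonneg _ (by rw [h2A]; linarith)
  have hinv2 : 0 ≤ α1inv ((2 / κ) * σ s) :=
    hinv_nonneg _ (by rw [h2B]; linarith)
  rcases le_total B A with hc | hc
  · have : ‖x t - xh t‖ ≤ α1inv (2 * Real.exp (-κ * t) * α2 ‖x 0 - xh 0‖) := by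
      apply key _ (by rw [h2A]; linarith)
      rw [h2A]
      calc α1 ‖x t - xh t‖ ≤ A + B := le_trans hlow hbound
        _ ≤ 2 * A := by linarith
    linarith
  · have : ‖x t - xh t‖ ≤ α1inv ((2 / κ) * σ s) := by
      apply key _ (by rw [h2B]; linarith)
      rw [h2B]
      calc α1 ‖x t - xh t‖ ≤ A + B := le_trans hlow hbound
        _ ≤ 2 * B := by linarith
    linarith
end

section
/- Let h : X → ℝ be continuously differentiable on a compact set X ⊂ ℝⁿ with h = 0 on ∂X and h > 0 on the interior of X. Suppose x : [0,T] → ℝⁿ is a solution of ẋ = F(x) with x(0) ∈ int(X) and that along the solution d/dt h(x(t)) ≥ −μ·h(x(t)) for some μ > 0 whenever x(t) ∈ X. Then h(x(t)) ≥ e^{−μt}·h(x(0)) > 0 for all t ∈ [0,T], hence x(t) ∈ int(X) for all t ∈ [0,T]. -/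
open Set

/-- Forward invariance from a control barrier function: if `h` is `C¹`, vanishing on the
boundary of a compact set `X` and positive on its interior, and along a solution of
`ẋ = F(x)` one has `d/dt h(x(t)) ≥ -μ h(x(t))` whenever `x(t) ∈ X`, then starting from
the interior of `X`, `h(x(t)) ≥ e^{-μt} h(x(0)) > 0` and `x(t)` remains in `int(X)`. -/
theorem stmt8 {n : ℕ} (X : Set (EuclideanSpace ℝ (Fin n)))
    (h : EuclideanSpace ℝ (Fin n) → ℝ)
    (F : EuclideanSpace ℝ (Fin n) → EuclideanSpace ℝ (Fin n))
    (x : ℝ → EuclideanSpace ℝ (Fin n)) (μ T : ℝ) (hμ : 0 < μ) (hT : 0 ≤ T)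
    (hXcompact : IsCompact X)
    (hC1 : ContDiff ℝ 1 h)
    (hboundary : ∀ y ∈ frontier X, h y = 0)
    (hinterior : ∀ y ∈ interior X, 0 < h y)
    (hsol : ∀ t, HasDerivAt x (F (x t)) t)
    (hx0 : x 0 ∈ interior X)
    (hbar : ∀ t ∈ Icc (0:ℝ) T, x t ∈ X →
      -μ * h (x t) ≤ fderiv ℝ h (x t) (F (x t))) :
    ∀ t ∈ Icc (0:ℝ) T,
      Real.exp (-μ * t) * h (x 0) ≤ h (x t) ∧ 0 < h (x t) ∧ x t ∈ interior X := by
  have hxc : Continuous x := by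
    rw [continuous_iff_continuousAt]
    exact fun t => (hsol t).continuousAt
  have hXclosed : IsClosed X := hXcompact.isClosed
  have hdiff : Differentiable ℝ h := hC1.differentiable one_ne_zero
  have hg : ∀ s, HasDerivAt (fun t => h (x t)) (fderiv ℝ h (x s) (F (x s))) s :=
    fun s => (hdiff (x s)).hasFDerivAt.comp_hasDerivAt s (hsol s)
  have h0pos : 0 < h (x 0) := hinterior _ hx0
  -- Grönwall lower bound on any interval [0,t] where the solution stays in X
  have gron : ∀ t ∈ Icc (0:ℝ) T, (∀ s ∈ Icc (0:ℝ) t, x s ∈ X) →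
      Real.exp (-μ * t) * h (x 0) ≤ h (x t) := by
    intro t ht hmap
    set f : ℝ → ℝ := fun s => Real.exp (μ * s) * h (x s) with hf
    have hfd : ∀ s, HasDerivAt f
        (Real.exp (μ * s) * (μ * h (x s) + fderiv ℝ h (x s) (F (x s)))) s := by
      intro s
      have h1 : HasDerivAt (fun u => Real.exp (μ * u)) (Real.exp (μ * s) * μ) s := by
        have := (Real.hasDerivAt_exp (μ * s)).comp s ((hasDerivAt_id s).const_mul μ)
        simpa [mul_comm, Function.comp_def] using this
      have := h1.mul (hg s)
      convert this using 1
      · rfl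
      · rfl
      · rfl
      ring
    have hfc : Continuous f := by
      rw [continuous_iff_continuousAt]
      exact fun s => (hfd s).continuousAt
    have hmono : MonotoneOn f (Icc 0 t) := by
      apply monotoneOn_of_deriv_nonneg (convex_Icc 0 t) hfc.continuousOn
      · exact fun s _ => ((hfd s).differentiableAt).differentiableWithinAt
      · intro s hs
        rw [(hfd s).deriv]
        have hs' : s ∈ Icc 0 t := interior_subset hs
        have hsT : s ∈ Icc 0 T := ⟨hs'.1, hs'.2.trans ht.2⟩
        have hb := hbar s hsT (hmap s hs')
        have hnn : 0 ≤ μ * h (x s) + fderiv ℝ h (x s) (F (x s)) := by linarith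
        positivity
    have hft : f 0 ≤ f t := hmono ⟨le_refl 0, ht.1⟩ ⟨ht.1, le_refl t⟩ ht.1
    have hf0 : f 0 = h (x 0) := by simp [hf]
    have hfte : f t = Real.exp (μ * t) * h (x t) := rfl
    rw [hf0, hfte] at hft
    have hepos : (0:ℝ) < Real.exp (μ * t) := Real.exp_pos _
    rw [neg_mul, Real.exp_neg]
    rw [inv_mul_le_iff₀ hepos]
    linarith
  -- membership in interior from membership in X plus positivity
  have hintmem : ∀ t ∈ Icc (0:ℝ) T, (∀ s ∈ Icc (0:ℝ) t, x s ∈ X) → x t ∈ interior X := by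
    intro t ht hmap
    have hpos : 0 < h (x t) :=
      lt_of_lt_of_le (by positivity) (gron t ht hmap)
    by_contra hc
    have hfr : x t ∈ frontier X := by
      rw [hXclosed.frontier_eq]
      exact ⟨hmap t ⟨ht.1, le_refl t⟩, hc⟩
    exact absurd (hboundary _ hfr) (ne_of_gt hpos)
  -- continuation argument
  set A := {t ∈ Icc (0:ℝ) T | ∀ s ∈ Icc (0:ℝ) t, x s ∈ X} with hA
  have h0A : (0:ℝ) ∈ A := by
    refine ⟨⟨le_refl 0, hT⟩, fun s hs => ?_⟩
    have : s = 0 := le_antisymm hs.2 hs.1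
    rw [this]; exact interior_subset hx0
  have hbdd : BddAbove A := ⟨T, fun t ht => ht.1.2⟩
  set a := sSup A with ha
  have ha0 : 0 ≤ a := le_csSup hbdd h0A
  have haT2 : a ≤ T := csSup_le ⟨0, h0A⟩ (fun t ht => ht.1.2)
  have hmapa : ∀ s ∈ Icc (0:ℝ) a, x s ∈ X := by
    intro s hs
    rcases eq_or_lt_of_le hs.2 with heq | hlt
    · rw [heq]
      rcases eq_or_lt_of_le ha0 with heq0 | hpos0
      · rw [← heq0]; exact interior_subset hx0
      · -- a > 0 : limit from the left
        refine hXclosed.mem_of_tendsto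
          ((hxc.continuousAt.tendsto).mono_left nhdsWithin_le_nhds :
            Filter.Tendsto x (nhdsWithin a (Iio a)) (nhds (x a))) ?_
        filter_upwards [Ioo_mem_nhdsLT_of_mem ⟨hpos0, le_refl a⟩] with u hu
        obtain ⟨t, htA, hut⟩ := exists_lt_of_lt_csSup ⟨0, h0A⟩ hu.2
        exact htA.2 u ⟨hu.1.le, hut.le⟩
    · obtain ⟨t, htA, hst⟩ := exists_lt_of_lt_csSup ⟨0, h0A⟩ hlt
      exact htA.2 s ⟨hs.1, hst.le⟩
  have haA : a ∈ A := ⟨⟨ha0, haT2⟩, hmapa⟩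
  have haTeq : a = T := by
    by_contra hne
    have haltT : a < T := lt_of_le_of_ne haT2 hne
    have hint := hintmem a ⟨ha0, haT2⟩ hmapa
    have hnhds : x ⁻¹' interior X ∈ nhds a :=
      hxc.continuousAt.preimage_mem_nhds (isOpen_interior.mem_nhds hint)
    obtain ⟨ε, hε, hball⟩ := Metric.mem_nhds_iff.mp hnhds
    set b := min (a + ε/2) T with hb
    have hab : a < b := lt_min (by linarith) haltT
    have hbA : b ∈ A := by
      refine ⟨⟨ha0.trans hab.le, min_le_right _ _⟩, fun s hs => ?_⟩
      rcases le_or_gt s a with hsa | has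
      · exact hmapa s ⟨hs.1, hsa⟩
      · have hsb : s ≤ a + ε/2 := hs.2.trans (min_le_left _ _)
        have : s ∈ Metric.ball a ε := by
          rw [Metric.mem_ball, Real.dist_eq, abs_of_pos (by linarith)]
          linarith
        exact interior_subset (hball this)
    exact absurd (le_csSup hbdd hbA) (not_le.mpr hab)
  intro t ht
  have htmap : ∀ s ∈ Icc (0:ℝ) t, x s ∈ X := fun s hs =>
    hmapa s ⟨hs.1, hs.2.trans (haTeq ▸ ht.2)⟩
  have h1 := gron t ht htmap
  have h2 : 0 < h (x t) := lt_of_lt_of_le (by positivity) h1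
  exact ⟨h1, h2, hintmem t ht htmap⟩
end
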